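/- arXiv:1601.07988 — 3 statements merged into one kernel-verified Lean document; each statement's English description precedes it below -/
import Mathlib

section
/- Let n ≥ 1 and L = w_1⋯w_{2n} ∈ 𝓛_n. Then the number of P1-matches in L equals the number of east steps of L that lie below the subdiagonal y = x − 1, i.e., the number of indices j with w_j = E such that the number of E's in w_1⋯w_j exceeds the number of N's in w_1⋯w_j by at least 2. By symmetry, the number of P6-matches in L equals the number of north steps of L above the superdiagonal y = x + 1, i.e., the number of indices j with w_j = N such that the number of N's in w_1⋯w_j exceeds the number of E's in w_1⋯w_j by at least 2. -/
/-!
Words over the alphabet {E, N} are encoded as `List Bool`,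
with `true` representing an east step `E` and `false` a north step `N`.
The word `w = w_1 ⋯ w_{2n}` corresponds to the lattice path from `(0,0)` to
`(n,n)` whose `j`-th step is east if `w_j = true` and north if `w_j = false`.
-/

/-- `w ∈ 𝓛_n`: the word `w` has exactly `n` `E`'s and `n` `N`'s. -/
def memL (n : ℕ) (w : List Bool) : Prop :=
  w.count true = n ∧ w.count false = n

/-- The (0-indexed, increasing) list of positions at which the letter `b` occurs in `w`. -/
def occPos (w : List Bool) (b : Bool) : List ℕ :=
  (List.range w.length).filter (fun j => w.getD j (!b) == b)

/-- `ps_w({i, i+1})` (with `i` 1-indexed): the length-4 word obtained from `w` by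
deleting, for each `j ∉ {i, i+1}`, the `j`-th occurrence of `E` and the `j`-th
occurrence of `N` (counted from left to right); i.e. the word formed by the
`i`-th and `(i+1)`-th occurrences of `E` and of `N`, read in their original order. -/
def pairedSubword (w : List Bool) (i : ℕ) : List Bool :=
  let keep : List ℕ := [(occPos w true).getD (i-1) 0, (occPos w true).getD i 0,
                        (occPos w false).getD (i-1) 0, (occPos w false).getD i 0]
  ((List.range w.length).filter (fun j => keep.contains j)).map (fun j => w.getD j true)

/-- `P`-mch(w): the number of paired steps `i` with `1 ≤ i ≤ n-1` at which the
paired pattern `P` matches in `w ∈ 𝓛_n`. -/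
def pmch (n : ℕ) (P w : List Bool) : ℕ :=
  ((Finset.Icc 1 (n-1)).filter (fun i => pairedSubword w i = P)).card

def P1 : List Bool := [true, true, false, false]   -- EENN
def P2 : List Bool := [true, false, true, false]   -- ENEN
def P3 : List Bool := [false, true, true, false]   -- NEEN
def P4 : List Bool := [true, false, false, true]   -- ENNE
def P5 : List Bool := [false, true, false, true]   -- NENE
def P6 : List Bool := [false, false, true, true]   -- NNEE

/-- The number of east steps of `w` lying below the subdiagonal `y = x - 1`:
indices `j` with `w_j = E` such that the number of `E`'s in `w_1 ⋯ w_j` exceeds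
the number of `N`'s in `w_1 ⋯ w_j` by at least `2`. -/
def eastBelow (w : List Bool) : ℕ :=
  ((Finset.range w.length).filter (fun j =>
    w.getD j false = true ∧ (w.take (j+1)).count false + 2 ≤ (w.take (j+1)).count true)).card

/-- The number of north steps of `w` lying above the superdiagonal `y = x + 1`. -/
def northAbove (w : List Bool) : ℕ :=
  ((Finset.range w.length).filter (fun j =>
    w.getD j true = false ∧ (w.take (j+1)).count true + 2 ≤ (w.take (j+1)).count false)).card


section Aux

lemma mem_occPos {w : List Bool} {b : Bool} {j : ℕ} :
    j ∈ occPos w b ↔ j < w.length ∧ w.getD j (!b) = b := by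
  simp [occPos, List.mem_filter, List.mem_range]

lemma occPos_pairwise (w : List Bool) (b : Bool) :
    List.Pairwise (· < ·) (occPos w b) :=
  List.pairwise_lt_range.filter _

lemma occPos_lt {w : List Bool} {b : Bool} {j : ℕ} (h : j ∈ occPos w b) :
    j < w.length := (mem_occPos.1 h).1

lemma occPos_getD {w : List Bool} {b : Bool} {j : ℕ} (h : j ∈ occPos w b) (d : Bool) :
    w.getD j d = b := by
  obtain ⟨h1, h2⟩ := mem_occPos.1 h
  rw [List.getD_eq_getElem _ _ h1] at h2 ⊢
  exact h2

lemma occPos_length (w : List Bool) (b : Bool) : (occPos w b).length = w.count b := by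
  induction w with
  | nil => simp [occPos]
  | cons a w ih =>
    have key : (List.range w.length).filter (fun j => (a :: w).getD (j+1) (!b) == b)
        = occPos w b := by
      rw [occPos]; exact List.filter_congr (fun x _ => by rw [List.getD_cons_succ])
    rw [occPos, List.length_cons, List.range_succ_eq_map, List.filter_cons, List.filter_map]
    have comp : ((fun j => (a :: w).getD j (!b) == b) ∘ Nat.succ)
        = (fun j => (a :: w).getD (j+1) (!b) == b) := rfl
    rw [comp, key, List.count_cons, List.getD_cons_zero]
    by_cases hab : a = b
    · simp [hab, ih]
    · have h1 : (a == b) = false := by simp [hab]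
      simp [h1, ih]

lemma range_filter_lt (L t : ℕ) (h : t ≤ L) :
    (List.range L).filter (fun j => decide (j < t)) = List.range t := by
  obtain ⟨s, rfl⟩ := Nat.exists_eq_add_of_le h
  rw [List.range_add, List.filter_append]
  have h1 : (List.range t).filter (fun j => decide (j < t)) = List.range t :=
    List.filter_eq_self.2 (by intro a ha; simp [List.mem_range] at ha ⊢; exact ha)
  have h2 : ((List.range s).map (fun x => t + x)).filter (fun j => decide (j < t)) = [] :=
    List.filter_eq_nil_iff.2 (by intro a ha; simp [List.mem_map] at ha ⊢; omega)
  rw [h1, h2, List.append_nil]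

lemma occPos_take (w : List Bool) (b : Bool) (t : ℕ) (ht : t ≤ w.length) :
    occPos (w.take t) b = (occPos w b).filter (fun x => decide (x < t)) := by
  rw [occPos, occPos, List.filter_filter]
  have hlen : (w.take t).length = t := by rw [List.length_take]; omega
  rw [hlen]
  have hcomm : (List.range w.length).filter
        (fun a => decide (a < t) && (w.getD a (!b) == b))
      = ((List.range w.length).filter (fun a => decide (a < t))).filter
        (fun a => w.getD a (!b) == b) := by
    rw [List.filter_filter]
    apply List.filter_congr; intro x _; rw [Bool.and_comm]
  rw [hcomm, range_filter_lt _ _ ht]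
  apply List.filter_congr
  intro x hx
  have hxt : x < t := List.mem_range.1 hx
  have hxl : x < w.length := lt_of_lt_of_le hxt ht
  have hxtake : x < (w.take t).length := by omega
  rw [List.getD_eq_getElem _ _ hxtake, List.getD_eq_getElem _ _ hxl, List.getElem_take]

lemma count_take (w : List Bool) (b : Bool) (t : ℕ) (ht : t ≤ w.length) :
    (w.take t).count b = ((occPos w b).filter (fun x => decide (x < t))).length := by
  rw [← occPos_take w b t ht, occPos_length]

lemma sorted_le {l : List ℕ} (hl : List.Pairwise (· < ·) l) {i j : ℕ} (hij : i ≤ j)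
    (hj : j < l.length) : l[i]'(lt_of_le_of_lt hij hj) ≤ l[j] := by
  rcases lt_or_eq_of_le hij with h | h
  · exact le_of_lt (List.pairwise_iff_getElem.1 hl i j _ hj h)
  · subst h; exact le_refl _

lemma sorted_getElem_lt_iff {l : List ℕ} (hl : List.Pairwise (· < ·) l) {k t : ℕ}
    (hk : k < l.length) :
    l[k] < t ↔ k + 1 ≤ (l.filter (fun x => decide (x < t))).length := by
  constructor
  · intro h
    have hsplit : l.filter (fun x => decide (x < t))
        = (l.take (k+1)).filter (fun x => decide (x < t))
          ++ (l.drop (k+1)).filter (fun x => decide (x < t)) := by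
      rw [← List.filter_append, List.take_append_drop]
    have htake : (l.take (k+1)).filter (fun x => decide (x < t)) = l.take (k+1) := by
      apply List.filter_eq_self.2
      intro a ha
      obtain ⟨m, hm, rfl⟩ := List.mem_iff_getElem.1 ha
      have hm' : m < (k+1) ⊓ l.length := by rw [← List.length_take]; exact hm
      have hmlen : m < l.length := by omega
      have hmk : m ≤ k := by omega
      rw [List.getElem_take]
      have : l[m]'hmlen ≤ l[k] := sorted_le hl hmk hk
      simp; omega
    rw [hsplit, List.length_append, htake, List.length_take]
    omega
  · intro h
    by_contra hlt
    push_neg at hlt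
    have hsplit : l.filter (fun x => decide (x < t))
        = (l.take k).filter (fun x => decide (x < t))
          ++ (l.drop k).filter (fun x => decide (x < t)) := by
      rw [← List.filter_append, List.take_append_drop]
    have hdrop : (l.drop k).filter (fun x => decide (x < t)) = [] := by
      apply List.filter_eq_nil_iff.2
      intro a ha
      obtain ⟨m, hm, rfl⟩ := List.mem_iff_getElem.1 ha
      rw [List.getElem_drop]
      have hkm : k + m < l.length := by
        have := hm; rw [List.length_drop] at this; omega
      have : l[k] ≤ l[k+m]'hkm := sorted_le hl (Nat.le_add_right _ _) hkm
      simp; omega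
    rw [hsplit, List.length_append, hdrop] at h
    have : ((l.take k).filter (fun x => decide (x < t))).length ≤ k := by
      calc ((l.take k).filter _).length ≤ (l.take k).length :=
            List.filter_sublist.length_le
        _ ≤ k := by rw [List.length_take]; omega
    simp at h
    omega

end Aux

section Subword

lemma getD_mem {l : List ℕ} {k : ℕ} (hk : k < l.length) : l.getD k 0 ∈ l := by
  rw [List.getD_eq_getElem _ _ hk]; exact List.getElem_mem _

lemma sorted_getD_lt {l : List ℕ} (hl : List.Pairwise (· < ·) l) {i j : ℕ} (hij : i < j)
    (hj : j < l.length) : l.getD i 0 < l.getD j 0 := by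
  rw [List.getD_eq_getElem _ _ (lt_trans hij hj), List.getD_eq_getElem _ _ hj]
  exact List.pairwise_iff_getElem.1 hl i j _ hj hij

lemma sorted_getD_lt_iff {l : List ℕ} (hl : List.Pairwise (· < ·) l) {k t : ℕ}
    (hk : k < l.length) :
    l.getD k 0 < t ↔ k + 1 ≤ (l.filter (fun x => decide (x < t))).length := by
  rw [List.getD_eq_getElem _ _ hk]; exact sorted_getElem_lt_iff hl hk

lemma list_len4 {α : Type*} {l : List α} (h : l.length = 4) :
    ∃ a0 a1 a2 a3, l = [a0, a1, a2, a3] := by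
  rcases l with _ | ⟨a0, _ | ⟨a1, _ | ⟨a2, _ | ⟨a3, _ | ⟨a4, l⟩⟩⟩⟩⟩
  · simp at h
  · simp at h
  · simp at h
  · simp at h
  · exact ⟨a0, a1, a2, a3, rfl⟩
  · simp [List.length_cons] at h

lemma aux_forward (g : ℕ → Bool) (b : Bool) (K : List ℕ) (e1 f0 : ℕ)
    (hsorted : List.Pairwise (· < ·) K) (hlen : K.length = 4)
    (he1 : e1 ∈ K) (hf0 : f0 ∈ K) (hge1 : g e1 = b) (hgf0 : g f0 = !b)
    (hmap : K.map g = [b, b, !b, !b]) : e1 < f0 := by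
  obtain ⟨a0, a1, a2, a3, rfl⟩ := list_len4 hlen
  have hbne : b ≠ !b := by cases b <;> simp
  simp only [List.map_cons, List.map_nil, List.cons.injEq, and_true] at hmap
  obtain ⟨h0, h1, h2, h3⟩ := hmap
  simp only [List.mem_cons, List.not_mem_nil, or_false] at he1 hf0
  have p := List.pairwise_iff_getElem.1 hsorted
  have s01 : a0 < a1 := by simpa using p 0 1 (by norm_num) (by norm_num) (by norm_num)
  have s02 : a0 < a2 := by simpa using p 0 2 (by norm_num) (by norm_num) (by norm_num)
  have s03 : a0 < a3 := by simpa using p 0 3 (by norm_num) (by norm_num) (by norm_num)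
  have s12 : a1 < a2 := by simpa using p 1 2 (by norm_num) (by norm_num) (by norm_num)
  have s13 : a1 < a3 := by simpa using p 1 3 (by norm_num) (by norm_num) (by norm_num)
  have s23 : a2 < a3 := by simpa using p 2 3 (by norm_num) (by norm_num) (by norm_num)
  rcases he1 with rfl | rfl | rfl | rfl <;> rcases hf0 with rfl | rfl | rfl | rfl <;>
    first
      | omega
      | (exact absurd (hge1.symm.trans hgf0) hbne)
      | (exact absurd (hge1.symm.trans h2) hbne)
      | (exact absurd (hge1.symm.trans h3) hbne)
      | (exact absurd (h0.symm.trans hgf0) hbne)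

lemma subword_eq_iff (L : ℕ) (g : ℕ → Bool) (b : Bool) (e0 e1 f0 f1 : ℕ)
    (hge0 : g e0 = b) (hge1 : g e1 = b) (hgf0 : g f0 = !b) (hgf1 : g f1 = !b)
    (hL0 : e0 < L) (hL1 : e1 < L) (hL2 : f0 < L) (hL3 : f1 < L)
    (he : e0 < e1) (hf : f0 < f1) (keep : List ℕ)
    (hkeep : ∀ j, (keep.contains j = true) ↔ (j = e0 ∨ j = e1 ∨ j = f0 ∨ j = f1)) :
    ((List.range L).filter (fun j => keep.contains j)).map g = [b, b, !b, !b] ↔ e1 < f0 := by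
  set K := (List.range L).filter (fun j => keep.contains j) with hKdef
  have hbne : b ≠ !b := by cases b <;> simp
  have hef : ∀ x y : ℕ, g x = b → g y = (!b) → x ≠ y := by
    intro x y hx hy hxy
    rw [hxy, hy] at hx
    exact hbne hx.symm
  have hKnodup : K.Nodup := List.nodup_range.filter _
  have hKsorted : List.Pairwise (· < ·) K := List.pairwise_lt_range.filter _
  have hmemK : ∀ j, j ∈ K ↔ (j = e0 ∨ j = e1 ∨ j = f0 ∨ j = f1) := by
    intro j
    rw [hKdef, List.mem_filter, List.mem_range]
    constructor
    · rintro ⟨_, h⟩; exact (hkeep j).1 h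
    · intro h
      refine ⟨?_, (hkeep j).2 h⟩
      rcases h with rfl | rfl | rfl | rfl <;> assumption
  have hlnodup : ([e0, e1, f0, f1] : List ℕ).Nodup := by
    have h1 := hef _ _ hge0 hgf0
    have h2 := hef _ _ hge0 hgf1
    have h3 := hef _ _ hge1 hgf0
    have h4 := hef _ _ hge1 hgf1
    simp only [List.nodup_cons, List.mem_cons, List.not_mem_nil, or_false, List.nodup_nil,
      and_true, not_or, not_false_eq_true]
    omega
  have hperm : K.Perm [e0, e1, f0, f1] := by
    apply List.perm_of_nodup_nodup_toFinset_eq hKnodup hlnodup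
    ext x
    simp only [List.mem_toFinset, hmemK, List.mem_cons, List.not_mem_nil, or_false]
  constructor
  · intro hmap
    have hlen : K.length = 4 := by rw [hperm.length_eq]; rfl
    exact aux_forward g b K e1 f0 hKsorted hlen
      (hperm.mem_iff.2 (by simp)) (hperm.mem_iff.2 (by simp)) hge1 hgf0 hmap
  · intro h
    haveI : IsAntisymm ℕ (· < ·) := ⟨fun a b h1 h2 => by omega⟩
    have hKeq : K = [e0, e1, f0, f1] := by
      refine List.Perm.eq_of_pairwise (fun a b _ _ h1 h2 => by omega) hKsorted ?_ hperm
      simp only [List.pairwise_cons, List.mem_cons, List.not_mem_nil, or_false, List.Pairwise.nil,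
        and_true, forall_eq_or_imp, forall_eq, false_implies, forall_const]
      omega
    rw [hKeq]
    simp [hge0, hge1, hgf0, hgf1]

lemma pairedSubword_eq_iff (w : List Bool) (n : ℕ)
    (hT : (occPos w true).length = n) (hFa : (occPos w false).length = n)
    (b : Bool) (i : ℕ) (h1 : 1 ≤ i) (hin : i < n) :
    pairedSubword w i = [b, b, !b, !b] ↔
      (occPos w b).getD i 0 < (occPos w (!b)).getD (i - 1) 0 := by
  have hE : i < (occPos w true).length := by omega
  have hE0 : i - 1 < (occPos w true).length := by omega
  have hF : i < (occPos w false).length := by omega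
  have hF0 : i - 1 < (occPos w false).length := by omega
  cases b with
  | true =>
    rw [pairedSubword]
    exact subword_eq_iff w.length (fun j => w.getD j true) true
      ((occPos w true).getD (i-1) 0) ((occPos w true).getD i 0)
      ((occPos w false).getD (i-1) 0) ((occPos w false).getD i 0)
      (occPos_getD (getD_mem hE0) true) (occPos_getD (getD_mem hE) true)
      (occPos_getD (getD_mem hF0) true) (occPos_getD (getD_mem hF) true)
      (occPos_lt (getD_mem hE0)) (occPos_lt (getD_mem hE))
      (occPos_lt (getD_mem hF0)) (occPos_lt (getD_mem hF))
      (sorted_getD_lt (occPos_pairwise w true) (by omega) hE)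
      (sorted_getD_lt (occPos_pairwise w false) (by omega) hF)
      _ (fun j => by simp)
  | false =>
    rw [pairedSubword]
    exact subword_eq_iff w.length (fun j => w.getD j true) false
      ((occPos w false).getD (i-1) 0) ((occPos w false).getD i 0)
      ((occPos w true).getD (i-1) 0) ((occPos w true).getD i 0)
      (occPos_getD (getD_mem hF0) true) (occPos_getD (getD_mem hF) true)
      (occPos_getD (getD_mem hE0) true) (occPos_getD (getD_mem hE) true)
      (occPos_lt (getD_mem hF0)) (occPos_lt (getD_mem hF))
      (occPos_lt (getD_mem hE0)) (occPos_lt (getD_mem hE))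
      (sorted_getD_lt (occPos_pairwise w false) (by omega) hF)
      (sorted_getD_lt (occPos_pairwise w true) (by omega) hE)
      _ (fun j => by simp; tauto)

end Subword

section Main

lemma general_count (n : ℕ) (hn : 1 ≤ n) (w : List Bool) (b : Bool)
    (hT : (occPos w true).length = n) (hFa : (occPos w false).length = n) :
    pmch n [b, b, !b, !b] w =
      ((Finset.range w.length).filter (fun j =>
        w.getD j (!b) = b ∧ (w.take (j+1)).count (!b) + 2 ≤ (w.take (j+1)).count b)).card := by
  have hE : (occPos w b).length = n := by cases b with | false => exact hFa | true => exact hT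
  have hF : (occPos w (!b)).length = n := by cases b with | false => exact hT | true => exact hFa
  have hwcount : w.count b = n := by rw [← occPos_length w b]; exact hE
  rw [pmch]
  apply Finset.card_bij (fun i _ => (occPos w b).getD i 0)
  · intro i hi
    simp only [Finset.mem_filter, Finset.mem_Icc] at hi
    obtain ⟨⟨hi1, hi2⟩, hps⟩ := hi
    have hiE : i < (occPos w b).length := by omega
    have hi0F : i - 1 < (occPos w (!b)).length := by omega
    have hmatch : (occPos w b).getD i 0 < (occPos w (!b)).getD (i-1) 0 :=
      (pairedSubword_eq_iff w n hT hFa b i hi1 (by omega)).1 hps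
    have hjE : (occPos w b).getD i 0 ∈ occPos w b := getD_mem hiE
    have hjw : (occPos w b).getD i 0 < w.length := occPos_lt hjE
    simp only [Finset.mem_filter, Finset.mem_range]
    refine ⟨hjw, occPos_getD hjE _, ?_⟩
    have hcb : i + 1 ≤ (w.take ((occPos w b).getD i 0 + 1)).count b := by
      rw [count_take w b _ (by omega)]
      exact (sorted_getD_lt_iff (occPos_pairwise w b) hiE).1 (by omega)
    have hcnb : (w.take ((occPos w b).getD i 0 + 1)).count (!b) ≤ i - 1 := by
      by_contra hcon
      push_neg at hcon
      have h2 : (i - 1) + 1 ≤ (w.take ((occPos w b).getD i 0 + 1)).count (!b) := by omega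
      rw [count_take w (!b) _ (by omega)] at h2
      have h3 := (sorted_getD_lt_iff (occPos_pairwise w (!b)) hi0F).2 h2
      omega
    omega
  · intro i1 hi1 i2 hi2 heq
    simp only [Finset.mem_filter, Finset.mem_Icc] at hi1 hi2
    have h1 : i1 < (occPos w b).length := by omega
    have h2 : i2 < (occPos w b).length := by omega
    by_contra hne
    rcases Nat.lt_or_ge i1 i2 with h | h
    · have := sorted_getD_lt (occPos_pairwise w b) h h2; omega
    · have h' : i2 < i1 := by omega
      have := sorted_getD_lt (occPos_pairwise w b) h' h1; omega
  · intro j hj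
    simp only [Finset.mem_filter, Finset.mem_range] at hj
    obtain ⟨hjw, hgb, hcnt⟩ := hj
    have hjE : j ∈ occPos w b := mem_occPos.2 ⟨hjw, hgb⟩
    obtain ⟨k, hkE, hkj⟩ := List.mem_iff_getElem.1 hjE
    have hkj' : (occPos w b).getD k 0 = j := by
      rw [List.getD_eq_getElem _ _ hkE]; exact hkj
    have hc1low : k + 1 ≤ (w.take (j+1)).count b := by
      rw [count_take w b (j+1) (by omega)]
      exact (sorted_getD_lt_iff (occPos_pairwise w b) hkE).1 (by omega)
    have hc1high : (w.take (j+1)).count b ≤ k + 1 := by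
      by_contra hcon
      push_neg at hcon
      rcases Nat.lt_or_ge (k+1) (occPos w b).length with hk1 | hk1
      · have h2 : (k+1) + 1 ≤ (w.take (j+1)).count b := by omega
        rw [count_take w b (j+1) (by omega)] at h2
        have h3 := (sorted_getD_lt_iff (occPos_pairwise w b) hk1).2 h2
        have h4 := sorted_getD_lt (occPos_pairwise w b) (show k < k + 1 by omega) hk1
        omega
      · have h5 : (w.take (j+1)).count b ≤ w.count b := (List.take_sublist _ _).count_le b
        omega
    have hk1 : 1 ≤ k := by omega
    have hk0F : k - 1 < (occPos w (!b)).length := by omega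
    have hFk : j < (occPos w (!b)).getD (k-1) 0 := by
      by_contra hcon
      push_neg at hcon
      have h6 : (k-1) + 1 ≤ (w.take (j+1)).count (!b) := by
        rw [count_take w (!b) (j+1) (by omega)]
        exact (sorted_getD_lt_iff (occPos_pairwise w (!b)) hk0F).1 (by omega)
      omega
    refine ⟨k, ?_, hkj'⟩
    simp only [Finset.mem_filter, Finset.mem_Icc]
    refine ⟨⟨hk1, by omega⟩, ?_⟩
    rw [pairedSubword_eq_iff w n hT hFa b k hk1 (by omega)]
    omega

end Main


theorem P1_matches_eq_east_steps_below_subdiagonal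
    (n : ℕ) (hn : 1 ≤ n) (w : List Bool) (hw : memL n w) :
    pmch n P1 w = eastBelow w ∧ pmch n P6 w = northAbove w := by
  have hT : (occPos w true).length = n := by rw [occPos_length]; exact hw.1
  have hFa : (occPos w false).length = n := by rw [occPos_length]; exact hw.2
  exact ⟨general_count n hn w true hT hFa, general_count n hn w false hT hFa⟩
end

section
/- Let n ≥ 1 and L = w_1⋯w_{2n} ∈ 𝓛_n. Then the number of P3-matches in L equals crossʰ(L), the number of indices i with 1 ≤ i ≤ n−1 such that w_1⋯w_{2i} contains exactly i E's and i N's, w_{2i} = E, and w_{2i+1} = E (horizontal crossings of the diagonal y = x). By symmetry, the number of P4-matches in L equals crossᵛ(L), the number of indices i with 1 ≤ i ≤ n−1 such that w_1⋯w_{2i} contains exactly i E's and i N's, w_{2i} = N, and w_{2i+1} = N (vertical crossings of the diagonal). -/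
/-- The path of `w` passes through the interior diagonal point `[i,i]`:
the prefix `w_1 ⋯ w_{2i}` contains exactly `i` `E`'s and `i` `N`'s. -/
abbrev onDiag (w : List Bool) (i : ℕ) : Prop :=
  (w.take (2*i)).count true = i ∧ (w.take (2*i)).count false = i

/-- `crossʰ(w)`: the number of horizontal crossings of the diagonal, i.e. interior
diagonal points preceded by an east step and followed by an east step. -/
def crossH (n : ℕ) (w : List Bool) : ℕ :=
  ((Finset.Icc 1 (n-1)).filter (fun i =>
    onDiag w i ∧ w.getD (2*i-1) false = true ∧ w.getD (2*i) false = true)).card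

/-- `crossᵛ(w)`: the number of vertical crossings of the diagonal, i.e. interior
diagonal points preceded by a north step and followed by a north step. -/
def crossV (n : ℕ) (w : List Bool) : ℕ :=
  ((Finset.Icc 1 (n-1)).filter (fun i =>
    onDiag w i ∧ w.getD (2*i-1) true = false ∧ w.getD (2*i) true = false)).card

lemma count_add_count (w : List Bool) (b : Bool) : w.count b + w.count (!b) = w.length := by
  have h : ∀ v : List Bool, v.count true + v.count false = v.length := by
    intro v
    induction v with
    | nil => simp
    | cons a t ih =>
      simp only [List.count_cons, List.length_cons]
      cases a <;> simp <;> omega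
  cases b
  · simpa using (Nat.add_comm _ _).trans (h w)
  · simpa using h w

lemma getD_map_add_one (l : List ℕ) {k : ℕ} (hk : k < l.length) :
    (l.map (·+1)).getD k 0 = l.getD k 0 + 1 := by
  rw [List.getD_eq_getElem _ _ (by simpa using hk), List.getD_eq_getElem _ _ hk,
    List.getElem_map]

lemma count_take_mono (w : List Bool) (b : Bool) {p q : ℕ} (h : p ≤ q) :
    (w.take p).count b ≤ (w.take q).count b := by
  have hs : (w.take p).Sublist (w.take q) := by
    have : (w.take q).take p = w.take p := by
      rw [List.take_take, Nat.min_eq_left h]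
    rw [← this]; exact List.take_sublist _ _
  exact hs.count_le b

lemma lt_of_count_take_lt (w : List Bool) (b : Bool) {p q : ℕ}
    (h : (w.take p).count b < (w.take q).count b) : p < q := by
  by_contra hc
  exact absurd (count_take_mono w b (Nat.le_of_not_lt hc)) (Nat.not_le_of_lt h)

lemma count_take_succ (w : List Bool) (b : Bool) {p : ℕ} (hp : p < w.length) :
    (w.take (p+1)).count b = (w.take p).count b + (if w.getD p (!b) = b then 1 else 0) := by
  have hsome : w[p]? = some w[p] := List.getElem?_eq_getElem hp
  simp only [List.take_succ, hsome, Option.toList_some, List.count_append,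
    List.getD_eq_getElem w (!b) hp, List.count_singleton']
  all_goals by_cases h : w[p] = b <;> simp [h]

lemma occPos_cons (a : Bool) (w : List Bool) (b : Bool) :
    occPos (a :: w) b = (if a = b then [0] else []) ++ (occPos w b).map (·+1) := by
  unfold occPos
  rw [show (a :: w).length = w.length + 1 from rfl, List.range_succ_eq_map, List.filter_cons,
    List.filter_map]
  have hs : ((fun j => ((a :: w).getD j (!b) == b)) ∘ Nat.succ) = (fun j => (w.getD j (!b) == b)) := rfl
  rw [hs]
  have h0 : (a :: w).getD 0 (!b) = a := rfl
  rw [h0]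
  by_cases h : a = b <;> simp [h, Nat.succ_eq_add_one]

lemma occ_spec (w : List Bool) (b : Bool) {k : ℕ} (hk : k < w.count b) :
    (occPos w b).getD k 0 < w.length ∧ w.getD ((occPos w b).getD k 0) (!b) = b ∧
      (w.take ((occPos w b).getD k 0)).count b = k := by
  induction w generalizing k with
  | nil => simp at hk
  | cons a t ih =>
    rw [occPos_cons]
    by_cases h : a = b
    · subst h
      cases k with
      | zero => simp
      | succ k' =>
        have hk' : k' < t.count a := by simp [List.count_cons] at hk; omega
        have hlen : k' < (occPos t a).length := by rw [occPos_length]; exact hk'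
        have hmap : ((if a = a then [0] else []) ++ (occPos t a).map (·+1)).getD (k'+1) 0
            = (occPos t a).getD k' 0 + 1 := by
          simp only [if_pos rfl, List.singleton_append, List.getD_cons_succ]
          exact getD_map_add_one _ hlen
        rw [hmap]
        obtain ⟨h1, h2, h3⟩ := ih hk'
        refine ⟨by simpa using Nat.succ_lt_succ h1, h2, ?_⟩
        rw [List.take_succ_cons, List.count_cons, h3]; simp
    · have hk' : k < t.count b := by
        have : (a :: t).count b = t.count b := by simp [List.count_cons, h]
        omega
      have hlen : k < (occPos t b).length := by rw [occPos_length]; exact hk'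
      have hmap : ((if a = b then [0] else []) ++ (occPos t b).map (·+1)).getD k 0
          = (occPos t b).getD k 0 + 1 := by
        simp only [if_neg h, List.nil_append]
        exact getD_map_add_one _ hlen
      rw [hmap]
      obtain ⟨h1, h2, h3⟩ := ih hk'
      refine ⟨by simpa using Nat.succ_lt_succ h1, h2, ?_⟩
      rw [List.take_succ_cons, List.count_cons, h3]; simp [h]

lemma occ_unique (w : List Bool) (b : Bool) {p k : ℕ} (hp : p < w.length)
    (hb : w.getD p (!b) = b) (hc : (w.take p).count b = k) :
    (occPos w b).getD k 0 = p := by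
  have hk : k < w.count b := by
    have h1 : (w.take (p+1)).count b = k + 1 := by
      rw [count_take_succ w b hp, hc, if_pos hb]
    have h2 : (w.take (p+1)).count b ≤ w.count b := (List.take_sublist _ _).count_le b
    omega
  obtain ⟨h1, h2, h3⟩ := occ_spec w b hk
  set q := (occPos w b).getD k 0 with hq
  rcases Nat.lt_trichotomy q p with h | h | h
  · have hq1 : (w.take (q+1)).count b = k + 1 := by
      rw [count_take_succ w b h1, h3, if_pos h2]
    have hle : (w.take (q+1)).count b ≤ (w.take p).count b := count_take_mono w b h
    omega
  · exact h
  · have hp1 : (w.take (p+1)).count b = k + 1 := by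
      rw [count_take_succ w b hp, hc, if_pos hb]
    have hle : (w.take (p+1)).count b ≤ (w.take q).count b := count_take_mono w b h
    omega

lemma filter_mem_four {m a b c d : ℕ} (hab : a < b) (hbc : b < c) (hcd : c < d) (hd : d < m)
    (keep : List ℕ) (hmem : ∀ j, j ∈ keep ↔ j = a ∨ j = b ∨ j = c ∨ j = d) :
    (List.range m).filter (fun j => keep.contains j) = [a, b, c, d] := by
  refine (fun hp h1 h2 => List.Perm.eq_of_pairwise' (r := (· ≤ ·)) h1 h2 hp) ?_ ?_ ?_
  · apply List.perm_of_nodup_nodup_toFinset_eq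
    · exact (List.nodup_range (n := m)).filter _
    · simp; omega
    · ext j
      simp only [List.mem_toFinset, List.mem_filter, List.mem_range, List.elem_eq_mem,
        decide_eq_true_eq, List.contains, List.mem_cons, List.mem_singleton,
        List.not_mem_nil, or_false, hmem]
      omega
  · refine List.Pairwise.imp (fun h => Nat.le_of_lt h) ?_
    exact (List.pairwise_lt_range (n := m)).filter _
  · simp [List.pairwise_cons]; omega

lemma getD_default_eq (w : List Bool) {p : ℕ} (hp : p < w.length) (d d' : Bool) :
    w.getD p d = w.getD p d' := by
  rw [List.getD_eq_getElem _ _ hp, List.getD_eq_getElem _ _ hp]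

lemma key (n : ℕ) (hn : 1 ≤ n) (w : List Bool) (hw : memL n w) (b : Bool) (i : ℕ)
    (hi1 : 1 ≤ i) (hi2 : i ≤ n - 1) :
    pairedSubword w i = [!b, b, b, !b] ↔
      ((w.take (2*i)).count b = i ∧ (w.take (2*i)).count (!b) = i ∧
        w.getD (2*i-1) (!b) = b ∧ w.getD (2*i) (!b) = b) := by
  obtain ⟨hwt, hwf⟩ := hw
  have hcb : w.count b = n := by cases b <;> assumption
  have hcnb : w.count (!b) = n := by cases b <;> simpa
  have hlw : w.length = 2 * n := by
    have := count_add_count w b; omega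
  have hbne : b ≠ !b := by cases b <;> simp
  have hocc : ((occPos w true) = occPos w b ∧ (occPos w false) = occPos w (!b)) ∨
      ((occPos w true) = occPos w (!b) ∧ (occPos w false) = occPos w b) := by
    cases b <;> simp
  obtain ⟨he1l, he1b, he1c⟩ := occ_spec w b (k := i-1) (by omega)
  obtain ⟨he2l, he2b, he2c⟩ := occ_spec w b (k := i) (by omega)
  obtain ⟨hf1l, hf1b', hf1c⟩ := occ_spec w (!b) (k := i-1) (by omega)
  obtain ⟨hf2l, hf2b', hf2c⟩ := occ_spec w (!b) (k := i) (by omega)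
  obtain ⟨e1, he1def⟩ : ∃ x, x = (occPos w b).getD (i-1) 0 := ⟨_, rfl⟩
  obtain ⟨e2, he2def⟩ : ∃ x, x = (occPos w b).getD i 0 := ⟨_, rfl⟩
  obtain ⟨f1, hf1def⟩ : ∃ x, x = (occPos w (!b)).getD (i-1) 0 := ⟨_, rfl⟩
  obtain ⟨f2, hf2def⟩ : ∃ x, x = (occPos w (!b)).getD i 0 := ⟨_, rfl⟩
  rw [← he1def] at he1l he1b he1c
  rw [← he2def] at he2l he2b he2c
  rw [← hf1def] at hf1l hf1b' hf1c
  rw [← hf2def] at hf2l hf2b' hf2c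
  have hf1b : w.getD f1 (!b) = !b := (getD_default_eq w hf1l (!b) (!(!b))).trans hf1b'
  have hf2b : w.getD f2 (!b) = !b := (getD_default_eq w hf2l (!b) (!(!b))).trans hf2b'
  have te1 : w.getD e1 true = b := (getD_default_eq w he1l true (!b)).trans he1b
  have te2 : w.getD e2 true = b := (getD_default_eq w he2l true (!b)).trans he2b
  have tf1 : w.getD f1 true = !b := (getD_default_eq w hf1l true (!b)).trans hf1b
  have tf2 : w.getD f2 true = !b := (getD_default_eq w hf2l true (!b)).trans hf2b
  have he12 : e1 < e2 := lt_of_count_take_lt w b (by rw [he1c, he2c]; omega)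
  have hf12 : f1 < f2 := lt_of_count_take_lt w (!b) (by rw [hf1c, hf2c]; omega)
  have hkeepmem : ∀ j : ℕ,
      (j ∈ [(occPos w true).getD (i-1) 0, (occPos w true).getD i 0,
            (occPos w false).getD (i-1) 0, (occPos w false).getD i 0]) ↔
      (j = e1 ∨ j = e2 ∨ j = f1 ∨ j = f2) := by
    rcases hocc with ⟨h1, h2⟩ | ⟨h1, h2⟩ <;> rw [h1, h2] <;>
      rw [← he1def, ← he2def, ← hf1def, ← hf2def] <;> intro j <;>
      simp only [List.mem_cons, List.not_mem_nil, or_false] <;> tauto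
  have hps : ∀ x1 x2 x3 x4 : ℕ, x1 < x2 → x2 < x3 → x3 < x4 → x4 < w.length →
      (∀ j : ℕ, (j = x1 ∨ j = x2 ∨ j = x3 ∨ j = x4) ↔ (j = e1 ∨ j = e2 ∨ j = f1 ∨ j = f2)) →
      pairedSubword w i = [w.getD x1 true, w.getD x2 true, w.getD x3 true, w.getD x4 true] := by
    intro x1 x2 x3 x4 h12 h23 h34 h4 hperm
    have hmem : ∀ j : ℕ, j ∈ [(occPos w true).getD (i-1) 0, (occPos w true).getD i 0,
        (occPos w false).getD (i-1) 0, (occPos w false).getD i 0] ↔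
        (j = x1 ∨ j = x2 ∨ j = x3 ∨ j = x4) := fun j => (hkeepmem j).trans (hperm j).symm
    simp only [pairedSubword]
    rw [filter_mem_four h12 h23 h34 h4 _ hmem]
    simp
  constructor
  · intro h
    have hne : ∀ p q : ℕ, w.getD p true = b → w.getD q true = !b → p ≠ q := by
      intro p q hp hq hpq
      apply hbne
      calc b = w.getD p true := hp.symm
        _ = w.getD q true := by rw [hpq]
        _ = !b := hq
    have hne11 : e1 ≠ f1 := hne _ _ te1 tf1
    have hne12 : e1 ≠ f2 := hne _ _ te1 tf2
    have hne21 : e2 ≠ f1 := hne _ _ te2 tf1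
    have hne22 : e2 ≠ f2 := hne _ _ te2 tf2
    rcases Nat.lt_or_ge e2 f1 with hA | hA
    · rw [hps e1 e2 f1 f2 he12 hA hf12 hf2l (fun j => by omega)] at h
      rw [te1, te2, tf1, tf2] at h
      exact absurd h (by cases b <;> simp)
    rcases Nat.lt_or_ge f2 e1 with hB | hB
    · rw [hps f1 f2 e1 e2 hf12 hB he12 he2l (fun j => by omega)] at h
      rw [te1, te2, tf1, tf2] at h
      exact absurd h (by cases b <;> simp)
    have hA' : f1 < e2 := lt_of_le_of_ne hA (Ne.symm hne21)
    have hB' : e1 < f2 := lt_of_le_of_ne hB hne12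
    rcases Nat.lt_or_ge e1 f1 with hC | hC
    · rcases Nat.lt_or_ge e2 f2 with hD | hD
      · rw [hps e1 f1 e2 f2 hC hA' hD hf2l (fun j => by omega)] at h
        rw [te1, te2, tf1, tf2] at h
        exact absurd h (by cases b <;> simp)
      · have hD' : f2 < e2 := lt_of_le_of_ne hD (Ne.symm hne22)
        rw [hps e1 f1 f2 e2 hC hf12 hD' he2l (fun j => by omega)] at h
        rw [te1, te2, tf1, tf2] at h
        exact absurd h (by cases b <;> simp)
    · have hC' : f1 < e1 := lt_of_le_of_ne hC (Ne.symm hne11)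
      rcases Nat.lt_or_ge e2 f2 with hD | hD
      · -- good case: f1 < e1 < e2 < f2
        have hstep : (w.take (f1+1)).count (!b) = i := by
          rw [count_take_succ w (!b) hf1l, hf1c, if_pos hf1b']
          omega
        have hge1 : i ≤ (w.take e1).count (!b) := by
          rw [← hstep]; exact count_take_mono w (!b) hC'
        have hle1 : (w.take e1).count (!b) ≤ i := by
          rw [← hf2c]; exact count_take_mono w (!b) (le_of_lt hB')
        have hc1 : (w.take e1).count (!b) = i := le_antisymm hle1 hge1
        have hge2 : i ≤ (w.take e2).count (!b) := by
          rw [← hc1]; exact count_take_mono w (!b) (le_of_lt he12)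
        have hle2 : (w.take e2).count (!b) ≤ i := by
          rw [← hf2c]; exact count_take_mono w (!b) (le_of_lt hD)
        have hc2 : (w.take e2).count (!b) = i := le_antisymm hle2 hge2
        have hlen1 : (w.take e1).length = e1 := by
          rw [List.length_take]; omega
        have hlen2 : (w.take e2).length = e2 := by
          rw [List.length_take]; omega
        have hsum1 := count_add_count (w.take e1) b
        have hsum2 := count_add_count (w.take e2) b
        have he1v : e1 = 2*i - 1 := by omega
        have he2v : e2 = 2*i := by omega
        rw [← he1v, ← he2v]
        exact ⟨he2c, hc2, he1b, he2b⟩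
      · have hD' : f2 < e2 := lt_of_le_of_ne hD (Ne.symm hne22)
        rw [hps f1 e1 f2 e2 hC' hB' hD' he2l (fun j => by omega)] at h
        rw [te1, te2, tf1, tf2] at h
        exact absurd h (by cases b <;> simp)
  · rintro ⟨hd1, hd2, hb1, hb2⟩
    have h2il : 2*i < w.length := by omega
    have h2i1l : 2*i-1 < w.length := by omega
    have hsub : 2*i-1+1 = 2*i := by omega
    have hstep : (w.take (2*i)).count b = (w.take (2*i-1)).count b + 1 := by
      rw [← hsub, count_take_succ w b h2i1l, if_pos hb1]
      simp
    have hcb1 : (w.take (2*i-1)).count b = i - 1 := by omega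
    have he1v : e1 = 2*i-1 := by
      rw [he1def]; exact occ_unique w b h2i1l hb1 hcb1
    have he2v : e2 = 2*i := by
      rw [he2def]; exact occ_unique w b h2il hb2 hd1
    have hbb1 : ¬ (w.getD (2*i-1) (!(!b)) = !b) := by
      rw [getD_default_eq w h2i1l (!(!b)) (!b), hb1]; exact fun hh => hbne hh
    have hstep2 : (w.take (2*i)).count (!b) = (w.take (2*i-1)).count (!b) := by
      rw [← hsub, count_take_succ w (!b) h2i1l, if_neg hbb1]
      simp
    have hz : (w.take (2*i-1)).count (!b) = i := by omega
    have hf1lt : f1 < e1 := by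
      rw [he1v]
      apply lt_of_count_take_lt w (!b)
      rw [hf1c, hz]
      omega
    have hf2gt : e2 < f2 := by
      rw [he2v]
      by_contra hcon
      have hf2le : f2 + 1 ≤ 2*i + 1 := by omega
      have hx : (w.take (f2+1)).count (!b) = i + 1 := by
        rw [count_take_succ w (!b) hf2l, hf2c, if_pos hf2b']
      have hbb2 : ¬ (w.getD (2*i) (!(!b)) = !b) := by
        rw [getD_default_eq w h2il (!(!b)) (!b), hb2]; exact fun hh => hbne hh
      have hy : (w.take (2*i+1)).count (!b) = i := by
        rw [count_take_succ w (!b) h2il, if_neg hbb2, hd2]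
        simp
      have := count_take_mono w (!b) hf2le
      omega
    rw [hps f1 e1 e2 f2 hf1lt he12 hf2gt hf2l (fun j => by omega)]
    rw [te1, te2, tf1, tf2]

theorem P3_matches_eq_horizontal_crossings
    (n : ℕ) (hn : 1 ≤ n) (w : List Bool) (hw : memL n w) :
    pmch n P3 w = crossH n w ∧ pmch n P4 w = crossV n w := by
  constructor
  · unfold pmch crossH
    apply congrArg
    apply Finset.filter_congr
    intro i hi
    simp only [Finset.mem_Icc] at hi
    have hkey := key n hn w hw true i hi.1 hi.2
    simp only [Bool.not_true] at hkey
    rw [show (P3 : List Bool) = [false, true, true, false] from rfl, hkey]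
    unfold onDiag
    tauto
  · unfold pmch crossV
    apply congrArg
    apply Finset.filter_congr
    intro i hi
    simp only [Finset.mem_Icc] at hi
    have hkey := key n hn w hw false i hi.1 hi.2
    simp only [Bool.not_false] at hkey
    rw [show (P4 : List Bool) = [true, false, false, true] from rfl, hkey]
    unfold onDiag
    tauto
end

section
/- For every n ≥ 1 and every k ≥ 0, the number of words L ∈ 𝓛_n that cross the diagonal exactly k times equals the number of words L ∈ 𝓛_n that bounce off the diagonal exactly k times. -/
/-- The number of crossings of the diagonal: interior diagonal points `[i,i]` with
`w_{2i} = w_{2i+1}`. -/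
def crossCount (n : ℕ) (w : List Bool) : ℕ :=
  ((Finset.Icc 1 (n-1)).filter (fun i =>
    onDiag w i ∧ w.getD (2*i-1) false = w.getD (2*i) false)).card

/-- The number of bounces off the diagonal: interior diagonal points `[i,i]` with
`w_{2i} ≠ w_{2i+1}`. -/
def bounceCount (n : ℕ) (w : List Bool) : ℕ :=
  ((Finset.Icc 1 (n-1)).filter (fun i =>
    onDiag w i ∧ w.getD (2*i-1) false ≠ w.getD (2*i) false)).card

def hgt (w : List Bool) (m : ℕ) : ℤ :=
  ((w.take m).count true : ℤ) - ((w.take m).count false : ℤ)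

def Tc (w : List Bool) (m : ℕ) : ℕ :=
  ((Finset.Icc 1 m).filter (fun p => p % 2 = 0 ∧ hgt w p = 0)).card

def Fm (w : List Bool) : List Bool :=
  w.mapIdx (fun p b => xor (decide (Tc w p % 2 = 1)) b)

theorem length_Fm (w : List Bool) : (Fm w).length = w.length := by
  simp [Fm]

theorem getElem_Fm (w : List Bool) (p : ℕ) (h : p < w.length) :
    (Fm w)[p]'(by simpa [length_Fm] using h) = xor (decide (Tc w p % 2 = 1)) w[p] := by
  simp [Fm]

theorem hgt_zero (w : List Bool) : hgt w 0 = 0 := by simp [hgt]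

theorem hgt_succ_lt (w : List Bool) (m : ℕ) (h : m < w.length) :
    hgt w (m+1) = hgt w m + (if w[m] = true then 1 else -1) := by
  have : w.take (m+1) = w.take m ++ [w[m]] := by
    rw [List.take_succ]
    simp [List.getElem?_eq_getElem h]
  rw [hgt, hgt, this]
  rw [List.count_append, List.count_append]
  cases hw : w[m] <;> simp [hw] <;> ring

theorem hgt_succ_ge (w : List Bool) (m : ℕ) (h : w.length ≤ m) :
    hgt w (m+1) = hgt w m := by
  simp [hgt, List.take_of_length_le h, List.take_of_length_le (Nat.le_succ_of_le h)]

theorem Tc_succ (w : List Bool) (m : ℕ) :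
    Tc w (m+1) = Tc w m + (if (m+1) % 2 = 0 ∧ hgt w (m+1) = 0 then 1 else 0) := by
  unfold Tc
  have : Finset.Icc 1 (m+1) = insert (m+1) (Finset.Icc 1 m) := by
    ext x; simp [Finset.mem_Icc, Nat.lt_succ_iff]; omega
  rw [this, Finset.filter_insert]
  split_ifs with h1
  · rw [Finset.card_insert_of_notMem (by simp)]
  · simp

theorem hgt_Fm (w : List Bool) (m : ℕ) :
    hgt (Fm w) m = if Tc w m % 2 = 1 then -hgt w m else hgt w m := by
  induction m with
  | zero => simp [hgt_zero, Tc]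
  | succ m ih =>
    have hT := Tc_succ w m
    by_cases h : m < w.length
    · have h' : m < (Fm w).length := by rwa [length_Fm]
      rw [hgt_succ_lt _ _ h', hgt_succ_lt _ _ h, getElem_Fm w m h, ih]
      by_cases hnew : (m+1) % 2 = 0 ∧ hgt w (m+1) = 0
      · have hz : hgt w m + (if w[m] = true then (1:ℤ) else -1) = 0 := by
          rw [← hgt_succ_lt _ _ h]; exact hnew.2
        rw [hT, if_pos hnew]
        by_cases hc : Tc w m % 2 = 1 <;> cases hw : w[m] <;>
          simp [hc, hw] at hz ⊢ <;>
          rcases Nat.mod_two_eq_zero_or_one (Tc w m + 1) with h2 | h2 <;> simp [h2] <;> omega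
      · rw [hT, if_neg hnew]
        by_cases hc : Tc w m % 2 = 1 <;> cases hw : w[m] <;>
          simp [hc, hw] <;> ring
    · push_neg at h
      have h' : (Fm w).length ≤ m := by rwa [length_Fm]
      rw [hgt_succ_ge _ _ h', hgt_succ_ge _ _ h, ih]
      by_cases hnew : (m+1) % 2 = 0 ∧ hgt w (m+1) = 0
      · have hz : hgt w m = 0 := by rw [← hgt_succ_ge _ _ h]; exact hnew.2
        simp [hz]
      · rw [hT, if_neg hnew]; simp

theorem hgt_Fm_zero_iff (w : List Bool) (m : ℕ) :
    hgt (Fm w) m = 0 ↔ hgt w m = 0 := by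
  rw [hgt_Fm]; split_ifs <;> simp

theorem Tc_Fm (w : List Bool) (m : ℕ) : Tc (Fm w) m = Tc w m := by
  unfold Tc
  congr 1
  apply Finset.filter_congr
  intro p _
  simp [hgt_Fm_zero_iff]

theorem Fm_Fm (w : List Bool) : Fm (Fm w) = w := by
  apply List.ext_getElem
  · simp [length_Fm]
  · intro p h1 h2
    have hp : p < w.length := by simpa [length_Fm] using h1
    have hp' : p < (Fm w).length := by rwa [length_Fm]
    rw [getElem_Fm (Fm w) p hp', getElem_Fm w p hp, Tc_Fm]
    cases hd : decide (Tc w p % 2 = 1) <;> simp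

theorem count_tf (w : List Bool) : w.count true + w.count false = w.length := by
  induction w with
  | nil => simp
  | cons a l ih => cases a <;> simp [List.count_cons] <;> omega

theorem memL_len {n : ℕ} {w : List Bool} (hw : memL n w) : w.length = 2*n := by
  have := count_tf w
  obtain ⟨h1, h2⟩ := hw
  omega

theorem memL_Fm {n : ℕ} {w : List Bool} (hw : memL n w) : memL n (Fm w) := by
  have hl := memL_len hw
  have h1 : hgt w w.length = 0 := by
    simp [hgt, List.take_length, hw.1, hw.2]
  have h2 : hgt (Fm w) w.length = 0 := (hgt_Fm_zero_iff w _).2 h1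
  have hs := count_tf (Fm w)
  rw [length_Fm] at hs
  have h3 : (Fm w).take w.length = Fm w := by
    apply List.take_of_length_le; rw [length_Fm]
  rw [hgt, h3] at h2
  constructor <;> omega

theorem onDiag_iff_hgt {w : List Bool} {i : ℕ} (h : 2*i ≤ w.length) :
    onDiag w i ↔ hgt w (2*i) = 0 := by
  have hs := count_tf (w.take (2*i))
  rw [List.length_take] at hs
  unfold onDiag hgt
  omega

theorem onDiag_Fm {w : List Bool} {i : ℕ} (h : 2*i ≤ w.length) :
    onDiag (Fm w) i ↔ onDiag w i := by
  have h' : 2*i ≤ (Fm w).length := by rwa [length_Fm]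
  rw [onDiag_iff_hgt h, onDiag_iff_hgt h', hgt_Fm_zero_iff]

theorem Tc_jump {w : List Bool} {i : ℕ} (hi : 1 ≤ i) (hd : hgt w (2*i) = 0) :
    Tc w (2*i) = Tc w (2*i-1) + 1 := by
  have he : 2*i = (2*i-1) + 1 := by omega
  rw [he, Tc_succ, ← he]
  rw [if_pos ⟨by omega, hd⟩]

theorem cross_Fm (n : ℕ) (hn : 1 ≤ n) {w : List Bool} (hw : memL n w) :
    crossCount n (Fm w) = bounceCount n w := by
  unfold crossCount bounceCount
  congr 1
  apply Finset.filter_congr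
  intro i hi
  simp only [Finset.mem_Icc] at hi
  have hlen : w.length = 2*n := memL_len hw
  have h2i : 2*i ≤ w.length := by omega
  have hOD := onDiag_Fm (w := w) (i := i) h2i
  by_cases hd : onDiag w i
  · have hz : hgt w (2*i) = 0 := (onDiag_iff_hgt h2i).1 hd
    have hjump := Tc_jump hi.1 hz
    have hp1 : 2*i - 1 < w.length := by omega
    have hp2 : 2*i < w.length := by omega
    have hp1' : 2*i - 1 < (Fm w).length := by rwa [length_Fm]
    have hp2' : 2*i < (Fm w).length := by rwa [length_Fm]
    rw [List.getD_eq_getElem _ _ hp1', List.getD_eq_getElem _ _ hp2',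
        List.getD_eq_getElem _ _ hp1, List.getD_eq_getElem _ _ hp2,
        getElem_Fm w _ hp1, getElem_Fm w _ hp2, hjump]
    simp only [hd, hOD, true_and, iff_true, true_iff]
    have hpar : ((Tc w (2*i-1) + 1) % 2 = 1) ↔ ¬ (Tc w (2*i-1) % 2 = 1) := by omega
    by_cases hc : Tc w (2*i-1) % 2 = 1 <;>
      cases hx : w[2*i-1] <;> cases hy : w[2*i] <;>
      simp [hc, hpar]
  · simp [hd, hOD]
theorem count_k_crossings_eq_count_k_bounces (n : ℕ) (hn : 1 ≤ n) (k : ℕ) :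
    {w : List Bool | memL n w ∧ crossCount n w = k}.ncard
      = {w : List Bool | memL n w ∧ bounceCount n w = k}.ncard := by
  have hinj : Function.Injective Fm := Function.Involutive.injective Fm_Fm
  have himg : {w : List Bool | memL n w ∧ bounceCount n w = k}
      = Fm '' {w : List Bool | memL n w ∧ crossCount n w = k} := by
    ext w
    simp only [Set.mem_image, Set.mem_setOf_eq]
    constructor
    · rintro ⟨hm, hb⟩
      exact ⟨Fm w, ⟨memL_Fm hm, by rw [cross_Fm n hn hm, hb]⟩, Fm_Fm w⟩
    · rintro ⟨v, ⟨hm, hc⟩, rfl⟩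
      refine ⟨memL_Fm hm, ?_⟩
      have h2 := cross_Fm n hn (memL_Fm hm)
      rw [Fm_Fm] at h2
      rw [← h2, hc]
  rw [himg, Set.ncard_image_of_injective _ hinj]
end
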